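/- Let H be a connected acyclic simple graph (a tree) on a vertex type V, and let E : V → V → ℝ be a matrix such that E i j = 0 whenever i and j are not adjacent in H and E i j = -E j i for all adjacent i, j. Then E is an additive no-arbitrage matrix over H; that is, antisymmetry on the edges is the sole restriction imposed by the no-arbitrage condition on a tree. -/

import Mathlib

/-- The sum of `E` over the consecutive edge steps of a walk `w` in `G`:
`∑_{i < length w} E v_i v_{i+1}`. -/
def walkSum {V : Type*} {G : SimpleGraph V} (E : V → V → ℝ) {u v : V} (w : G.Walk u v) : ℝ :=
  ∑ i ∈ Finset.range w.length, E (w.getVert i) (w.getVert (i + 1))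

/-- `E` is an additive no-arbitrage matrix over `G`: it vanishes on non-adjacent pairs and
its sum over the steps of every closed walk is zero. -/
def IsNoArbitrage {V : Type*} (G : SimpleGraph V) (E : V → V → ℝ) : Prop :=
  (∀ i j, ¬ G.Adj i j → E i j = 0) ∧ ∀ (v : V) (w : G.Walk v v), walkSum E w = 0

lemma walkSum_nil {V : Type*} {G : SimpleGraph V} (E : V → V → ℝ) {u : V} :
    walkSum E (SimpleGraph.Walk.nil : G.Walk u u) = 0 := by
  simp [walkSum]

lemma walkSum_cons {V : Type*} {G : SimpleGraph V} (E : V → V → ℝ) {u v w : V}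
    (h : G.Adj u v) (p : G.Walk v w) :
    walkSum E (SimpleGraph.Walk.cons h p) = E u v + walkSum E p := by
  unfold walkSum
  rw [SimpleGraph.Walk.length_cons, Finset.sum_range_succ']
  simp only [SimpleGraph.Walk.getVert_cons_succ, SimpleGraph.Walk.getVert_zero]
  rw [add_comm]

lemma walkSum_append {V : Type*} {G : SimpleGraph V} (E : V → V → ℝ) {u v w : V}
    (p : G.Walk u v) (q : G.Walk v w) :
    walkSum E (p.append q) = walkSum E p + walkSum E q := by
  induction p with
  | nil => simp [walkSum_nil]
  | cons h p ih =>
    rw [SimpleGraph.Walk.cons_append, walkSum_cons, walkSum_cons, ih, add_assoc]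

lemma path_eq_single {V : Type*} {H : SimpleGraph V} (hac : H.IsAcyclic) {u v : V}
    (h : H.Adj u v) (q : H.Walk v u) (hq : q.IsPath) :
    q = SimpleGraph.Walk.cons h.symm SimpleGraph.Walk.nil := by
  have h1 : (SimpleGraph.Walk.cons h.symm (SimpleGraph.Walk.nil) : H.Walk v u).IsPath := by
    simp [h.ne']
  have := SimpleGraph.isAcyclic_iff_path_unique.mp hac ⟨q, hq⟩ ⟨_, h1⟩
  exact congrArg Subtype.val this

lemma walkSum_bypass {V : Type*} [DecidableEq V] {H : SimpleGraph V} (hac : H.IsAcyclic)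
    (E : V → V → ℝ) (hanti : ∀ i j, H.Adj i j → E i j = - E j i) {u v : V}
    (p : H.Walk u v) : walkSum E p.bypass = walkSum E p := by
  induction p with
  | nil => rfl
  | @cons u w v ha p ih =>
    rw [show (SimpleGraph.Walk.cons ha p).bypass = if hs : u ∈ p.bypass.support
      then p.bypass.dropUntil u hs else SimpleGraph.Walk.cons ha p.bypass from rfl]
    split_ifs with hs
    · have hts := SimpleGraph.Walk.take_spec p.bypass hs
      have htp : (p.bypass.takeUntil u hs).IsPath :=
        (SimpleGraph.Walk.bypass_isPath p).takeUntil hs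
      have heq := path_eq_single hac ha (p.bypass.takeUntil u hs) htp
      have hsum : walkSum E p.bypass
          = walkSum E (p.bypass.takeUntil u hs) + walkSum E (p.bypass.dropUntil u hs) := by
        rw [← walkSum_append, hts]
      rw [walkSum_cons, ← ih, hsum, heq, walkSum_cons, walkSum_nil]
      have := hanti u w ha
      ring_nf
      linarith
    · rw [walkSum_cons, walkSum_cons, ih]

/-- On a tree, any matrix vanishing on non-edges and antisymmetric on edges is an additive
no-arbitrage matrix: antisymmetry is the sole restriction imposed by no-arbitrage. -/
theorem tree_antisymm_no_arbitrage {V : Type*} (H : SimpleGraph V)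
    (hconn : H.Connected) (hac : H.IsAcyclic)
    (E : V → V → ℝ) (h0 : ∀ i j, ¬ H.Adj i j → E i j = 0)
    (hanti : ∀ i j, H.Adj i j → E i j = - E j i) :
    IsNoArbitrage H E := by
  classical
  refine ⟨h0, fun v w => ?_⟩
  have h1 : walkSum E w.bypass = walkSum E w := walkSum_bypass hac E hanti w
  have h2 : w.bypass = SimpleGraph.Walk.nil :=
    SimpleGraph.Walk.isPath_iff_eq_nil.mp (SimpleGraph.Walk.bypass_isPath w)
  rw [← h1, h2, walkSum_nil]
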